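/- Layer-peeling bound for ReLU layers (combining equations (32)–(35)): let X be a set, x₁, …, x_M ∈ X, let G be a nonempty set of functions from X to ℝ^J such that for each m the set {g(x_m) : g ∈ G} ⊆ ℝ^J is bounded, let W ≥ 0, and let φ(t) = max(t, 0) be the ReLU function. Then E_ξ[ sup_{g ∈ G, w ∈ ℝ^J, ‖w‖₂ ≤ W} Σ_{m=1}^M ξ_m φ(⟨w, g(x_m)⟩) ] ≤ W · E_ξ[ sup_{g ∈ G} ‖ Σ_{m=1}^M ξ_m g(x_m) ‖₂ ], where ξ is uniform over {−1,+1}^M and ⟨·,·⟩ and ‖·‖₂ are the Euclidean inner product and norm on ℝ^J. -/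

import Mathlib

/-- The real sign `+1`/`−1` associated with a Boolean, used to enumerate sign vectors
`ξ ∈ {−1, +1}^I` as functions `I → Bool`. -/
noncomputable def sgn (b : Bool) : ℝ := if b then 1 else -1

open Set RealInnerProductSpace

lemma sgn_abs (b : Bool) : |sgn b| = 1 := by cases b <;> simp [sgn]

lemma sgn_not (b : Bool) : sgn (!b) = - sgn b := by cases b <;> simp [sgn]

/-- The two-point pairing lemma at the heart of the contraction principle. -/
lemma key_pair {ι : Type*} [Nonempty ι] (A B ψ : ι → ℝ)
    (h : ∀ i j, ψ i - ψ j ≤ |B i - B j|)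
    (h1 : BddAbove (Set.range fun i => A i + B i))
    (h2 : BddAbove (Set.range fun i => A i - B i)) :
    sSup (Set.range fun i => A i + ψ i) + sSup (Set.range fun i => A i - ψ i)
      ≤ sSup (Set.range fun i => A i + B i) + sSup (Set.range fun i => A i - B i) := by
  set R : ℝ := sSup (Set.range fun i => A i + B i) + sSup (Set.range fun i => A i - B i) with hR
  have main : ∀ i j, (A i + ψ i) + (A j - ψ j) ≤ R := by
    intro i j
    have hij := h i j
    have c1 : A i + B i ≤ sSup (Set.range fun i => A i + B i) := le_csSup h1 ⟨i, rfl⟩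
    have c2 : A j - B j ≤ sSup (Set.range fun i => A i - B i) := le_csSup h2 ⟨j, rfl⟩
    have c3 : A j + B j ≤ sSup (Set.range fun i => A i + B i) := le_csSup h1 ⟨j, rfl⟩
    have c4 : A i - B i ≤ sSup (Set.range fun i => A i - B i) := le_csSup h2 ⟨i, rfl⟩
    rcases abs_cases (B i - B j) with ⟨he, _⟩ | ⟨he, _⟩ <;> rw [he] at hij <;> linarith
  have h1' : ∀ i, sSup (Set.range fun j => A j - ψ j) ≤ R - (A i + ψ i) := by
    intro i
    apply csSup_le (Set.range_nonempty _)
    rintro u ⟨j, rfl⟩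
    have := main i j
    simp only []
    linarith
  have h2' : sSup (Set.range fun i => A i + ψ i) ≤ R - sSup (Set.range fun j => A j - ψ j) := by
    apply csSup_le (Set.range_nonempty _)
    rintro v ⟨i, rfl⟩
    have := h1' i
    simp only []
    linarith
  linarith

lemma bdd_aux {ι : Type*} {M : ℕ} (d : ι → Fin M → ℝ) (C : ℝ)
    (hd : ∀ i m, |d i m| ≤ C) (ε : Fin M → Bool) :
    BddAbove (Set.range fun i => ∑ m, sgn (ε m) * d i m) := by
  refine ⟨M * C, ?_⟩
  rintro v ⟨i, rfl⟩
  calc ∑ m, sgn (ε m) * d i m ≤ ∑ m, |sgn (ε m) * d i m| :=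
        Finset.sum_le_sum fun m _ => le_abs_self _
    _ = ∑ m : Fin M, |d i m| := by
        refine Finset.sum_congr rfl fun m _ => ?_
        rw [abs_mul, sgn_abs, one_mul]
    _ ≤ ∑ m : Fin M, C := Finset.sum_le_sum fun m _ => hd i m
    _ = M * C := by simp [mul_comm]

lemma ite_abs_le {M : ℕ} (T : Fin M → ℝ) (C : ℝ) (hC : ∀ m, |T m| ≤ C) (k : ℕ) (m : Fin M) :
    |if (m : ℕ) < k then T m else max (T m) 0| ≤ C := by
  split
  · exact hC m
  · refine le_trans ?_ (hC m)
    rw [abs_le]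
    constructor
    · exact le_trans (neg_abs_le _) (le_max_left _ _)
    · exact max_le (le_abs_self _) (abs_nonneg _)

/-- One step of the contraction: de-ReLU coordinate `k`. -/
lemma contraction_step {ι : Type*} [Nonempty ι] {M : ℕ} (T : ι → Fin M → ℝ) (C : ℝ)
    (hC : ∀ i m, |T i m| ≤ C) (k : ℕ) (hk : k < M) :
    ∑ ε : Fin M → Bool,
        sSup (Set.range fun i => ∑ m, sgn (ε m) * (if (m : ℕ) < k then T i m else max (T i m) 0))
      ≤ ∑ ε : Fin M → Bool,
        sSup (Set.range fun i =>
          ∑ m, sgn (ε m) * (if (m : ℕ) < k + 1 then T i m else max (T i m) 0)) := by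
  classical
  set κ : Fin M := ⟨k, hk⟩ with hκ
  set gk : (Fin M → Bool) → ℝ := fun ε =>
    sSup (Set.range fun i => ∑ m, sgn (ε m) * (if (m : ℕ) < k then T i m else max (T i m) 0))
    with hgk
  set gk1 : (Fin M → Bool) → ℝ := fun ε =>
    sSup (Set.range fun i => ∑ m, sgn (ε m) * (if (m : ℕ) < k + 1 then T i m else max (T i m) 0))
    with hgk1
  have hinv : Function.Involutive (fun ε : Fin M → Bool => Function.update ε κ (!ε κ)) := by
    intro ε
    funext m
    rcases eq_or_ne m κ with rfl | hm
    · simp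
    · simp [Function.update_of_ne hm]
  set flip : (Fin M → Bool) → (Fin M → Bool) := fun ε => Function.update ε κ (!ε κ) with hflip
  have pair : ∀ ε, gk ε + gk (flip ε) ≤ gk1 ε + gk1 (flip ε) := by
    intro ε
    set s : ℝ := sgn (ε κ) with hs
    set A : ι → ℝ := fun i =>
      ∑ m ∈ Finset.univ.erase κ, sgn (ε m) * (if (m : ℕ) < k then T i m else max (T i m) 0)
      with hA
    set B : ι → ℝ := fun i => s * T i κ with hB
    set ψ : ι → ℝ := fun i => s * max (T i κ) 0 with hψ
    have hAk : ∀ (c : ι → Fin M → ℝ) (ε' : Fin M → Bool),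
        (∀ m, m ≠ κ → ε' m = ε m) →
        ∀ i, ∑ m, sgn (ε' m) * c i m =
          (∑ m ∈ Finset.univ.erase κ, sgn (ε m) * c i m) + sgn (ε' κ) * c i κ := by
      intro c ε' hε' i
      rw [← Finset.sum_erase_add _ _ (Finset.mem_univ κ)]
      congr 1
      refine Finset.sum_congr rfl fun m hm => ?_
      rw [hε' m (Finset.ne_of_mem_erase hm)]
    have hAeq : ∀ i, ∑ m ∈ Finset.univ.erase κ,
        sgn (ε m) * (if (m : ℕ) < k + 1 then T i m else max (T i m) 0) = A i := by
      intro i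
      refine Finset.sum_congr rfl fun m hm => ?_
      have hm' : (m : ℕ) ≠ k := fun h => Finset.ne_of_mem_erase hm (Fin.ext h)
      have : ((m : ℕ) < k + 1) ↔ ((m : ℕ) < k) := by omega
      simp [this]
    have hflipκ : (flip ε) κ = !ε κ := by simp [hflip]
    have hflipne : ∀ m, m ≠ κ → (flip ε) m = ε m := fun m hm => Function.update_of_ne hm _ _
    have hf1 : (fun i => ∑ m, sgn (ε m) * (if (m : ℕ) < k then T i m else max (T i m) 0))
        = fun i => A i + ψ i := by
      funext i
      rw [hAk (fun i m => if (m : ℕ) < k then T i m else max (T i m) 0) ε (fun _ _ => rfl) i]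
      simp [hA, hψ, hs, hκ]
    have hf2 : (fun i => ∑ m, sgn ((flip ε) m) * (if (m : ℕ) < k then T i m else max (T i m) 0))
        = fun i => A i - ψ i := by
      funext i
      rw [hAk (fun i m => if (m : ℕ) < k then T i m else max (T i m) 0) (flip ε) hflipne i,
        hflipκ, sgn_not]
      simp [hA, hψ, hs, hκ, sub_eq_add_neg]
    have hf3 : (fun i => ∑ m, sgn (ε m) * (if (m : ℕ) < k + 1 then T i m else max (T i m) 0))
        = fun i => A i + B i := by
      funext i
      rw [hAk (fun i m => if (m : ℕ) < k + 1 then T i m else max (T i m) 0) ε (fun _ _ => rfl) i,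
        hAeq]
      simp [hB, hs, hκ]
    have hf4 : (fun i => ∑ m, sgn ((flip ε) m) * (if (m : ℕ) < k + 1 then T i m else max (T i m) 0))
        = fun i => A i - B i := by
      funext i
      rw [hAk (fun i m => if (m : ℕ) < k + 1 then T i m else max (T i m) 0) (flip ε) hflipne i,
        hAeq, hflipκ, sgn_not]
      simp [hB, hs, hκ, sub_eq_add_neg]
    show sSup (Set.range fun i => ∑ m, sgn (ε m) * (if (m : ℕ) < k then T i m else max (T i m) 0))
        + sSup (Set.range fun i =>
            ∑ m, sgn ((flip ε) m) * (if (m : ℕ) < k then T i m else max (T i m) 0))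
      ≤ sSup (Set.range fun i =>
            ∑ m, sgn (ε m) * (if (m : ℕ) < k + 1 then T i m else max (T i m) 0))
        + sSup (Set.range fun i =>
            ∑ m, sgn ((flip ε) m) * (if (m : ℕ) < k + 1 then T i m else max (T i m) 0))
    rw [hf1, hf2, hf3, hf4]
    have hs1 : s = 1 ∨ s = -1 := by rcases Bool.eq_false_or_eq_true (ε κ) with h | h <;>
      simp [hs, sgn, h]
    refine key_pair A B ψ (fun i j => ?_) ?_ ?_
    · have h1 : |max (T i κ) 0 - max (T j κ) 0| ≤ |T i κ - T j κ| :=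
        abs_max_sub_max_le_abs _ _ _
      have h2 : |B i - B j| = |T i κ - T j κ| := by
        rcases hs1 with h | h <;> simp [hB, h, ← mul_sub, abs_mul, neg_sub, abs_sub_comm, neg_add_eq_sub]
      rw [h2]
      calc ψ i - ψ j = s * (max (T i κ) 0 - max (T j κ) 0) := by simp [hψ]; ring
        _ ≤ |s * (max (T i κ) 0 - max (T j κ) 0)| := le_abs_self _
        _ = |max (T i κ) 0 - max (T j κ) 0| := by
            rcases hs1 with h | h <;> simp [h, abs_mul, neg_sub, abs_sub_comm]
        _ ≤ |T i κ - T j κ| := h1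
    · rw [← hf3]
      exact bdd_aux _ C (fun i m => ite_abs_le (T i) C (hC i) (k + 1) m) ε
    · rw [← hf4]
      exact bdd_aux _ C (fun i m => ite_abs_le (T i) C (hC i) (k + 1) m) (flip ε)
  -- sum up using the involution
  have hsum : ∀ (g : (Fin M → Bool) → ℝ),
      ∑ ε : Fin M → Bool, g (flip ε) = ∑ ε : Fin M → Bool, g ε :=
    fun g => Function.Bijective.sum_comp (hinv.bijective) g
  have h2 : (2 : ℝ) * (∑ ε : Fin M → Bool, gk ε) ≤ 2 * (∑ ε : Fin M → Bool, gk1 ε) := by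
    calc (2 : ℝ) * (∑ ε : Fin M → Bool, gk ε)
        = (∑ ε : Fin M → Bool, gk ε) + (∑ ε : Fin M → Bool, gk (flip ε)) := by
          rw [hsum gk]; ring
      _ = ∑ ε : Fin M → Bool, (gk ε + gk (flip ε)) := by rw [← Finset.sum_add_distrib]
      _ ≤ ∑ ε : Fin M → Bool, (gk1 ε + gk1 (flip ε)) := Finset.sum_le_sum fun ε _ => pair ε
      _ = (∑ ε : Fin M → Bool, gk1 ε) + (∑ ε : Fin M → Bool, gk1 (flip ε)) :=
          Finset.sum_add_distrib
      _ = 2 * (∑ ε : Fin M → Bool, gk1 ε) := by rw [hsum gk1]; ring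
  linarith

/-- Talagrand-style contraction for the ReLU. -/
lemma contraction {ι : Type*} [Nonempty ι] {M : ℕ} (T : ι → Fin M → ℝ) (C : ℝ)
    (hC : ∀ i m, |T i m| ≤ C) :
    ∑ ε : Fin M → Bool, sSup (Set.range fun i => ∑ m, sgn (ε m) * max (T i m) 0)
      ≤ ∑ ε : Fin M → Bool, sSup (Set.range fun i => ∑ m, sgn (ε m) * T i m) := by
  set S : ℕ → ℝ := fun k => ∑ ε : Fin M → Bool,
    sSup (Set.range fun i => ∑ m, sgn (ε m) * (if (m : ℕ) < k then T i m else max (T i m) 0))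
    with hS
  have hstep : ∀ k, k ≤ M → S 0 ≤ S k := by
    intro k
    induction k with
    | zero => intro _; exact le_refl _
    | succ n ih =>
      intro hn
      exact le_trans (ih (Nat.le_of_succ_le hn)) (contraction_step T C hC n (Nat.lt_of_succ_le hn))
  have h0 : S 0 = ∑ ε : Fin M → Bool, sSup (Set.range fun i => ∑ m, sgn (ε m) * max (T i m) 0) := by
    rw [hS]
    refine Finset.sum_congr rfl fun ε _ => ?_
    refine congrArg sSup (congrArg Set.range ?_)
    funext i
    exact Finset.sum_congr rfl fun m _ => by simp
  have hM : S M = ∑ ε : Fin M → Bool, sSup (Set.range fun i => ∑ m, sgn (ε m) * T i m) := by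
    rw [hS]
    refine Finset.sum_congr rfl fun ε _ => ?_
    refine congrArg sSup (congrArg Set.range ?_)
    funext i
    exact Finset.sum_congr rfl fun m _ => by simp [m.isLt]
  calc ∑ ε : Fin M → Bool, sSup (Set.range fun i => ∑ m, sgn (ε m) * max (T i m) 0)
      = S 0 := h0.symm
    _ ≤ S M := hstep M (le_refl M)
    _ = _ := hM

/-- Layer-peeling bound for ReLU layers (combining equations (32)–(35)): for a class `G`
of `ℝ^J`-valued functions with bounded images at the sample points, a weight-norm bound
`W ≥ 0`, and the ReLU `φ(t) = max(t, 0)`,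
`E_ξ[sup_{g ∈ G, ‖w‖₂ ≤ W} Σ_m ξ_m φ(⟨w, g(x_m)⟩)] ≤ W · E_ξ[sup_{g ∈ G} ‖Σ_m ξ_m g(x_m)‖₂]`,
where `ξ` is uniform over `{−1,+1}^M`. -/
theorem relu_layer_peeling {X : Type*} {M J : ℕ} (x : Fin M → X)
    (G : Set (X → EuclideanSpace ℝ (Fin J))) (hG : G.Nonempty)
    (hbdd : ∀ m, Bornology.IsBounded ((fun g => g (x m)) '' G))
    (W : ℝ) (hW : 0 ≤ W) :
    (2 ^ M : ℝ)⁻¹ *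
        ∑ ε : Fin M → Bool,
          sSup {v : ℝ | ∃ g ∈ G, ∃ w : EuclideanSpace ℝ (Fin J), ‖w‖ ≤ W ∧
            v = ∑ m, sgn (ε m) * max (∑ j, w j * (g (x m)) j) 0}
      ≤ W * ((2 ^ M : ℝ)⁻¹ *
          ∑ ε : Fin M → Bool,
            sSup {v : ℝ | ∃ g ∈ G, v = ‖∑ m, sgn (ε m) • g (x m)‖}) := by
  classical
  -- index type
  set ι : Type _ := {p : (X → EuclideanSpace ℝ (Fin J)) × EuclideanSpace ℝ (Fin J) //
    p.1 ∈ G ∧ ‖p.2‖ ≤ W} with hι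
  obtain ⟨g₀, hg₀⟩ := hG
  haveI : Nonempty ι := ⟨⟨(g₀, 0), hg₀, by simp [hW]⟩⟩
  -- bounds
  have hCm : ∀ m : Fin M, ∃ Cm : ℝ, ∀ g ∈ G, ‖g (x m)‖ ≤ Cm := by
    intro m
    obtain ⟨Cm, hCm⟩ := isBounded_iff_forall_norm_le.mp (hbdd m)
    exact ⟨Cm, fun g hg => hCm _ ⟨g, hg, rfl⟩⟩
  choose Cm hCm using hCm
  set D : ℝ := ∑ m, max (Cm m) 0 with hD
  have hCmD : ∀ m, Cm m ≤ D := fun m =>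
    le_trans (le_max_left _ _)
      (Finset.single_le_sum (fun m _ => le_max_right (Cm m) 0) (Finset.mem_univ m))
  have hnorm_le : ∀ (g : X → EuclideanSpace ℝ (Fin J)), g ∈ G → ∀ m, ‖g (x m)‖ ≤ D :=
    fun g hg m => le_trans (hCm m g hg) (hCmD m)
  -- the family
  set T : ι → Fin M → ℝ := fun i m => ∑ j, (i.1.2) j * (i.1.1 (x m)) j with hT
  have hTinner : ∀ (i : ι) m, T i m = ⟪i.1.2, i.1.1 (x m)⟫ := by
    intro i m
    rw [PiLp.inner_apply]
    simp [hT, mul_comm]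
  have hTbound : ∀ (i : ι) m, |T i m| ≤ W * D := by
    intro i m
    rw [hTinner]
    calc |⟪i.1.2, i.1.1 (x m)⟫| ≤ ‖i.1.2‖ * ‖i.1.1 (x m)‖ := abs_real_inner_le_norm _ _
      _ ≤ W * D := by
        have h1 := i.2.2
        have h2 := hnorm_le i.1.1 i.2.1 m
        have := norm_nonneg (i.1.2)
        have := norm_nonneg (i.1.1 (x m))
        nlinarith
  -- identify the LHS sets with ranges over ι
  have hset1 : ∀ ε : Fin M → Bool,
      {v : ℝ | ∃ g ∈ G, ∃ w : EuclideanSpace ℝ (Fin J), ‖w‖ ≤ W ∧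
        v = ∑ m, sgn (ε m) * max (∑ j, w j * (g (x m)) j) 0}
      = Set.range fun i : ι => ∑ m, sgn (ε m) * max (T i m) 0 := by
    intro ε
    ext v
    constructor
    · rintro ⟨g, hg, w, hw, rfl⟩
      exact ⟨⟨(g, w), hg, hw⟩, rfl⟩
    · rintro ⟨⟨⟨g, w⟩, hg, hw⟩, rfl⟩
      exact ⟨g, hg, w, hw, rfl⟩
  -- norm-set facts
  have hNne : ∀ ε : Fin M → Bool,
      {v : ℝ | ∃ g ∈ G, v = ‖∑ m, sgn (ε m) • g (x m)‖}.Nonempty :=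
    fun ε => ⟨_, g₀, hg₀, rfl⟩
  have hNbdd : ∀ ε : Fin M → Bool,
      BddAbove {v : ℝ | ∃ g ∈ G, v = ‖∑ m, sgn (ε m) • g (x m)‖} := by
    intro ε
    refine ⟨M * D, ?_⟩
    rintro v ⟨g, hg, rfl⟩
    calc ‖∑ m, sgn (ε m) • g (x m)‖ ≤ ∑ m, ‖sgn (ε m) • g (x m)‖ := norm_sum_le _ _
      _ = ∑ m : Fin M, ‖g (x m)‖ := by
          refine Finset.sum_congr rfl fun m _ => ?_
          rw [norm_smul, Real.norm_eq_abs, sgn_abs, one_mul]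
      _ ≤ ∑ m : Fin M, D := Finset.sum_le_sum fun m _ => hnorm_le g hg m
      _ = M * D := by simp [mul_comm]
  -- step 2: linear sup bounded by W times norm sup, per ε
  have step2 : ∀ ε : Fin M → Bool,
      sSup (Set.range fun i : ι => ∑ m, sgn (ε m) * T i m)
        ≤ W * sSup {v : ℝ | ∃ g ∈ G, v = ‖∑ m, sgn (ε m) • g (x m)‖} := by
    intro ε
    apply csSup_le (Set.range_nonempty _)
    rintro v ⟨i, rfl⟩
    obtain ⟨⟨g, w⟩, hg, hw⟩ := i
    set u : EuclideanSpace ℝ (Fin J) := ∑ m, sgn (ε m) • g (x m) with hu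
    have huj : ∀ j, u j = ∑ m, sgn (ε m) * (g (x m)) j := by
      intro j
      rw [hu]
      simp [WithLp.ofLp_sum, Finset.sum_apply]
    have hval : (∑ m, sgn (ε m) * T (⟨(g, w), hg, hw⟩ : ι) m) = ⟪w, u⟫ := by
      simp only [hT, PiLp.inner_apply, RCLike.inner_apply, conj_trivial, huj, Finset.mul_sum, Finset.sum_mul]
      rw [Finset.sum_comm]
      exact Finset.sum_congr rfl fun j _ => Finset.sum_congr rfl fun m _ => by ring
    calc (∑ m, sgn (ε m) * T (⟨(g, w), hg, hw⟩ : ι) m) = ⟪w, u⟫ := hval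
      _ ≤ ‖w‖ * ‖u‖ := real_inner_le_norm _ _
      _ ≤ W * ‖u‖ := mul_le_mul_of_nonneg_right hw (norm_nonneg u)
      _ ≤ W * sSup {v : ℝ | ∃ g ∈ G, v = ‖∑ m, sgn (ε m) • g (x m)‖} :=
          mul_le_mul_of_nonneg_left (le_csSup (hNbdd ε) ⟨g, hg, rfl⟩) hW
  -- assemble
  have main : ∑ ε : Fin M → Bool,
      sSup {v : ℝ | ∃ g ∈ G, ∃ w : EuclideanSpace ℝ (Fin J), ‖w‖ ≤ W ∧
        v = ∑ m, sgn (ε m) * max (∑ j, w j * (g (x m)) j) 0}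
      ≤ W * ∑ ε : Fin M → Bool,
          sSup {v : ℝ | ∃ g ∈ G, v = ‖∑ m, sgn (ε m) • g (x m)‖} := by
    calc ∑ ε : Fin M → Bool,
        sSup {v : ℝ | ∃ g ∈ G, ∃ w : EuclideanSpace ℝ (Fin J), ‖w‖ ≤ W ∧
          v = ∑ m, sgn (ε m) * max (∑ j, w j * (g (x m)) j) 0}
        = ∑ ε : Fin M → Bool,
            sSup (Set.range fun i : ι => ∑ m, sgn (ε m) * max (T i m) 0) := by
          exact Finset.sum_congr rfl fun ε _ => congrArg sSup (hset1 ε)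
      _ ≤ ∑ ε : Fin M → Bool, sSup (Set.range fun i : ι => ∑ m, sgn (ε m) * T i m) :=
          contraction T (W * D) hTbound
      _ ≤ ∑ ε : Fin M → Bool,
            W * sSup {v : ℝ | ∃ g ∈ G, v = ‖∑ m, sgn (ε m) • g (x m)‖} :=
          Finset.sum_le_sum fun ε _ => step2 ε
      _ = W * ∑ ε : Fin M → Bool,
            sSup {v : ℝ | ∃ g ∈ G, v = ‖∑ m, sgn (ε m) • g (x m)‖} := by
          rw [Finset.mul_sum]
  have hpow : (0 : ℝ) ≤ (2 ^ M : ℝ)⁻¹ := by positivity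
  calc (2 ^ M : ℝ)⁻¹ * ∑ ε : Fin M → Bool,
        sSup {v : ℝ | ∃ g ∈ G, ∃ w : EuclideanSpace ℝ (Fin J), ‖w‖ ≤ W ∧
          v = ∑ m, sgn (ε m) * max (∑ j, w j * (g (x m)) j) 0}
      ≤ (2 ^ M : ℝ)⁻¹ * (W * ∑ ε : Fin M → Bool,
          sSup {v : ℝ | ∃ g ∈ G, v = ‖∑ m, sgn (ε m) • g (x m)‖}) :=
        mul_le_mul_of_nonneg_left main hpow
    _ = W * ((2 ^ M : ℝ)⁻¹ * ∑ ε : Fin M → Bool,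
          sSup {v : ℝ | ∃ g ∈ G, v = ‖∑ m, sgn (ε m) • g (x m)‖}) := by ring
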